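/- Let T = (T_1, ..., T_d) be a d-tuple of n×n complex matrices with spherical polar decomposition T_i = V_i P, where Σ V_i*V_i ≤ I. Then the spherical Duggal transform satisfies ‖T^D‖_{s,2} ≤ √n ‖T‖_{s,2}. -/

import Mathlib

open scoped Matrix ComplexOrder

/-- Real power of a matrix via the continuous functional calculus (for Hermitian matrices). -/
noncomputable def mpow {m : Type*} [Fintype m] [DecidableEq m]
    (A : Matrix m m ℂ) (t : ℝ) : Matrix m m ℂ :=
  cfc (fun x : ℝ => x ^ t) A

/-- The operator (spectral) norm of a matrix. -/
noncomputable def opNorm {m : Type*} [Fintype m] [DecidableEq m] (A : Matrix m m ℂ) : ℝ :=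
  ‖Matrix.toEuclideanCLM (𝕜 := ℂ) A‖

/-- The Schatten `p`-norm of a matrix: `(tr |A|^p)^{1/p}`. -/
noncomputable def schattenNorm {m : Type*} [Fintype m] [DecidableEq m]
    (p : ℝ) (A : Matrix m m ℂ) : ℝ :=
  ((mpow (Aᴴ * A) (p / 2)).trace.re) ^ (1 / p)

/-- The spherical Schatten `p`-norm of a tuple: `(tr (∑ S_i* S_i)^{p/2})^{1/p}`. -/
noncomputable def sphSchattenNorm {m : Type*} [Fintype m] [DecidableEq m] {d : ℕ}
    (p : ℝ) (T : Fin d → Matrix m m ℂ) : ℝ :=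
  ((mpow (∑ i, (T i)ᴴ * T i) (p / 2)).trace.re) ^ (1 / p)

/- ### Auxiliary lemmas -/

private lemma mpow_one' {m : Type*} [Fintype m] [DecidableEq m] {A : Matrix m m ℂ}
    (hA : IsSelfAdjoint A) : mpow A 1 = A := by
  unfold mpow
  simp only [Real.rpow_one]
  exact cfc_id' ℝ A

open Matrix in
/-- The real trace of `Cᴴ * C` is the sum of `normSq` of all entries. -/
private lemma traceRe_eq {m n : Type*} [Fintype m] [Fintype n]
    (C : Matrix m n ℂ) : (Cᴴ * C).trace.re = ∑ i, ∑ j, Complex.normSq (C j i) := by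
  rw [Matrix.trace]
  simp only [Matrix.diag, Matrix.mul_apply, Matrix.conjTranspose_apply]
  rw [Complex.re_sum]
  refine Finset.sum_congr rfl fun i _ => ?_
  rw [Complex.re_sum]
  refine Finset.sum_congr rfl fun j _ => ?_
  simp [Complex.mul_re, Complex.normSq_apply]

open Matrix in
private lemma cs_normSq {m n : Type*} [Fintype n]
    (C : Matrix m n ℂ) (x : n → ℂ) (i : m) :
    Complex.normSq (∑ j, C i j * x j) ≤
      (∑ j, Complex.normSq (C i j)) * ∑ j, Complex.normSq (x j) := by
  have h1 : ‖∑ j, C i j * x j‖ ≤ ∑ j, ‖C i j‖ * ‖x j‖ := by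
    refine (norm_sum_le _ _).trans_eq ?_
    simp [norm_mul]
  calc Complex.normSq (∑ j, C i j * x j) = ‖∑ j, C i j * x j‖ ^ 2 := by
        rw [← Complex.sq_norm]
    _ ≤ (∑ j, ‖C i j‖ * ‖x j‖) ^ 2 := by
        apply pow_le_pow_left₀ (norm_nonneg _) h1
    _ ≤ (∑ j, ‖C i j‖ ^ 2) * ∑ j, ‖x j‖ ^ 2 := Finset.sum_mul_sq_le_sq_mul_sq _ _ _
    _ = _ := by
        congr 1 <;> refine Finset.sum_congr rfl fun j _ => ?_ <;>
          rw [← Complex.sq_norm]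

open Matrix in
/-- Key trace inequality: `tr(Vᴴ Q V) ≤ tr(Q) tr(Vᴴ V)` for `Q` positive semidefinite. -/
private lemma traceRe_conj_le {n : Type*} [Fintype n] [DecidableEq n]
    {Q : Matrix n n ℂ} (hQ : Q.PosSemidef) (V : Matrix n n ℂ) :
    (Vᴴ * Q * V).trace.re ≤ Q.trace.re * (Vᴴ * V).trace.re := by
  obtain ⟨C, rfl⟩ : ∃ C : Matrix n n ℂ, Q = Cᴴ * C := by
    open scoped MatrixOrder Norms.L2Operator in
    exact CStarAlgebra.nonneg_iff_eq_star_mul_self.mp hQ.nonneg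
  have hE : Vᴴ * (Cᴴ * C) * V = (C * V)ᴴ * (C * V) := by
    rw [Matrix.conjTranspose_mul]
    noncomm_ring
  rw [hE, traceRe_eq, traceRe_eq, traceRe_eq]
  calc ∑ i, ∑ j, Complex.normSq ((C * V) j i)
      ≤ ∑ i, ∑ j, (∑ k, Complex.normSq (C j k)) * ∑ k, Complex.normSq (V k i) := by
        refine Finset.sum_le_sum fun i _ => Finset.sum_le_sum fun j _ => ?_
        rw [Matrix.mul_apply]
        exact cs_normSq C (fun k => V k i) j
    _ = (∑ i, ∑ j, Complex.normSq (C j i)) * ∑ i, ∑ j, Complex.normSq (V j i) := by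
        simp_rw [← Finset.sum_mul]
        rw [← Finset.mul_sum]
        congr 1
        exact Finset.sum_comm

open Matrix in
private lemma traceRe_nonneg {n : Type*} [Fintype n] [DecidableEq n]
    {Q : Matrix n n ℂ} (hQ : Q.PosSemidef) : 0 ≤ Q.trace.re := by
  obtain ⟨C, rfl⟩ : ∃ C : Matrix n n ℂ, Q = Cᴴ * C := by
    open scoped MatrixOrder Norms.L2Operator in
    exact CStarAlgebra.nonneg_iff_eq_star_mul_self.mp hQ.nonneg
  rw [traceRe_eq]
  exact Finset.sum_nonneg fun i _ => Finset.sum_nonneg fun j _ => Complex.normSq_nonneg _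

/-- The spherical Duggal transform of a tuple of `n × n` matrices satisfies
`‖T^D‖_{s,2} ≤ √n ‖T‖_{s,2}`. -/
theorem sphSchattenNorm_two_duggal_le {n d : ℕ}
    (T V : Fin d → Matrix (Fin n) (Fin n) ℂ) (P : Matrix (Fin n) (Fin n) ℂ)
    (hP : P.PosSemidef) (hP2 : P * P = ∑ i, (T i)ᴴ * T i)
    (hT : ∀ i, T i = V i * P)
    (hV : ((1 : Matrix (Fin n) (Fin n) ℂ) - ∑ i, (V i)ᴴ * V i).PosSemidef) :
    sphSchattenNorm 2 (fun i => P * V i) ≤ Real.sqrt n * sphSchattenNorm 2 T := by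
  classical
  have hPH : Pᴴ = P := hP.isHermitian
  have hPP : (P * P).PosSemidef := by
    nth_rewrite 1 [← hPH]
    exact Matrix.posSemidef_conjTranspose_mul_self P
  set A : Matrix (Fin n) (Fin n) ℂ := ∑ i, (P * V i)ᴴ * (P * V i) with hA
  set B : Matrix (Fin n) (Fin n) ℂ := ∑ i, (T i)ᴴ * T i with hB
  -- self-adjointness
  have hAsa : IsSelfAdjoint A := by
    have : Aᴴ = A := by
      rw [hA, Matrix.conjTranspose_sum]
      exact Finset.sum_congr rfl fun i _ =>
        Matrix.isHermitian_conjTranspose_mul_self _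
    exact this
  have hBsa : IsSelfAdjoint B := by
    rw [← hP2]; exact hPP.isHermitian
  -- the three quantities
  have hterm : ∀ i, (P * V i)ᴴ * (P * V i) = (V i)ᴴ * (P * P) * V i := by
    intro i
    rw [Matrix.conjTranspose_mul, hPH]
    noncomm_ring
  have hBtr0 : 0 ≤ B.trace.re := by rw [← hP2]; exact traceRe_nonneg hPP
  -- trace of ∑ VᵢᴴVᵢ is at most n
  have hVsum : (∑ i, (V i)ᴴ * V i).trace.re ≤ n := by
    have h0 := traceRe_nonneg hV
    rw [Matrix.trace_sub, Matrix.trace_one] at h0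
    simp only [Complex.sub_re] at h0
    simp only [Complex.natCast_re, Fintype.card_fin] at h0
    push_cast at h0 ⊢
    linarith
  -- key inequality
  have hkey : A.trace.re ≤ n * B.trace.re := by
    have h1 : A.trace.re = ∑ i, ((V i)ᴴ * (P * P) * V i).trace.re := by
      rw [hA, Matrix.trace_sum, Complex.re_sum]
      exact Finset.sum_congr rfl fun i _ => by rw [hterm i]
    have h2 : ∑ i, ((V i)ᴴ * (P * P) * V i).trace.re
        ≤ ∑ i, (P * P).trace.re * ((V i)ᴴ * V i).trace.re :=
      Finset.sum_le_sum fun i _ => traceRe_conj_le hPP (V i)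
    have h3 : ∑ i, (P * P).trace.re * ((V i)ᴴ * V i).trace.re
        = (P * P).trace.re * (∑ i, (V i)ᴴ * V i).trace.re := by
      rw [Matrix.trace_sum, Complex.re_sum, Finset.mul_sum]
    have h4 : (P * P).trace.re * (∑ i, (V i)ᴴ * V i).trace.re
        ≤ (P * P).trace.re * n :=
      mul_le_mul_of_nonneg_left hVsum (traceRe_nonneg hPP)
    have h5 : (P * P).trace.re = B.trace.re := by rw [hP2]
    calc A.trace.re ≤ (P * P).trace.re * n := by
          rw [h1]; exact h2.trans (h3.le.trans h4)
      _ = n * B.trace.re := by rw [h5]; ring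
  have hAtr0 : 0 ≤ A.trace.re := by
    rw [hA, Matrix.trace_sum, Complex.re_sum]
    exact Finset.sum_nonneg fun i _ =>
      traceRe_nonneg (Matrix.posSemidef_conjTranspose_mul_self _)
  -- unfold the norms
  have e2 : (2 : ℝ) / 2 = 1 := by norm_num
  have hL : sphSchattenNorm 2 (fun i => P * V i) = A.trace.re ^ ((1 : ℝ) / 2) := by
    rw [sphSchattenNorm, e2, mpow_one' hAsa]
  have hR : sphSchattenNorm 2 T = B.trace.re ^ ((1 : ℝ) / 2) := by
    rw [sphSchattenNorm, e2, mpow_one' hBsa]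
  rw [hL, hR]
  have hn0 : (0 : ℝ) ≤ (n : ℝ) := Nat.cast_nonneg n
  calc A.trace.re ^ ((1 : ℝ) / 2) ≤ ((n : ℝ) * B.trace.re) ^ ((1 : ℝ) / 2) :=
        Real.rpow_le_rpow hAtr0 hkey (by norm_num)
    _ = Real.sqrt n * B.trace.re ^ ((1 : ℝ) / 2) := by
        rw [Real.mul_rpow hn0 hBtr0, Real.sqrt_eq_rpow]
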